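/- For n+1 points p₀, p₁, ..., pₙ in the Minkowski n-space, the squared volume of the simplex [p₀, ..., pₙ] (where volume is the Euclidean volume, i.e., |det of the matrix of edge vectors|/n!) satisfies the modified Cayley–Menger formula: vol²[p₀,...,pₙ] = ((-1)^n / (2^n (n!)²)) · det(M), where M is the (n+2)×(n+2) matrix with M₀₀ = 0, M₀ⱼ = Mⱼ₀ = 1 for j ≥ 1, and M_{j+1,k+1} = d²_{jk} for j,k = 0,...,n, where d²_{jk} = (pⱼ - pₖ, pⱼ - pₖ) is the Minkowski squared distance. -/

import Mathlib

open Matrix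

/-- Minkowski scalar product on `ℝ^n`: the last coordinate enters with a minus sign. -/
def minkProd (n : ℕ) (x y : Fin n → ℝ) : ℝ :=
  ∑ i : Fin n, (if (i : ℕ) = n - 1 then -1 else 1) * x i * y i

/-- The Euclidean volume of the simplex `[p₀, …, pₙ]`. -/
noncomputable def simplexVol (n : ℕ) (p : Fin (n + 1) → Fin n → ℝ) : ℝ :=
  (1 / n.factorial) * |(Matrix.of fun i j : Fin n => p i.succ j - p 0 j).det|

/-- The bordered Cayley–Menger matrix built from the Minkowski squared distances. -/
def cayleyMenger (n : ℕ) (p : Fin (n + 1) → Fin n → ℝ) :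
    Matrix (Fin (n + 2)) (Fin (n + 2)) ℝ :=
  Matrix.of fun i j =>
    if (i : ℕ) = 0 then (if (j : ℕ) = 0 then 0 else 1)
    else if (j : ℕ) = 0 then 1
    else minkProd n (p ⟨(i : ℕ) - 1, by have := i.isLt; omega⟩ -
                     p ⟨(j : ℕ) - 1, by have := j.isLt; omega⟩)
                   (p ⟨(i : ℕ) - 1, by have := i.isLt; omega⟩ -
                     p ⟨(j : ℕ) - 1, by have := j.isLt; omega⟩)

namespace CMaux

def g (n : ℕ) (i : Fin n) : ℝ := if (i : ℕ) = n - 1 then -1 else 1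

def v (n : ℕ) (p : Fin (n+1) → Fin n → ℝ) (i : Fin (n+1)) : Fin n → ℝ :=
  fun j => p i j - p 0 j

noncomputable def q (n : ℕ) (p : Fin (n+1) → Fin n → ℝ) (i : Fin (n+1)) : ℝ :=
  ∑ j, g n j * v n p i j * v n p i j

def V (n : ℕ) (p : Fin (n+1) → Fin n → ℝ) : Matrix (Fin n) (Fin n) ℝ :=
  Matrix.of fun k i => v n p k.succ i

noncomputable def X (n : ℕ) (p : Fin (n+1) → Fin n → ℝ) :
    Matrix (Fin 2 ⊕ Fin n) (Fin 2 ⊕ Fin n) ℝ :=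
  fromBlocks !![0,1;1,0] 0 (Matrix.of fun k t => if t = 0 then 1 else q n p k.succ) (V n p)

noncomputable def Y (n : ℕ) (p : Fin (n+1) → Fin n → ℝ) :
    Matrix (Fin 2 ⊕ Fin n) (Fin 2 ⊕ Fin n) ℝ :=
  fromBlocks 1 0 (Matrix.of fun k t => if t = 0 then q n p k.succ else 1)
    (Matrix.of fun k i => -2 * g n i * v n p k.succ i)

def e (n : ℕ) : Fin 2 ⊕ Fin n ≃ Fin (n+2) := finSumFinEquiv.trans (finCongr (by omega))

lemma e_inl (n : ℕ) (t : Fin 2) : ((e n (Sum.inl t) : Fin (n+2)) : ℕ) = (t : ℕ) := by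
  simp [e]

lemma e_inr (n : ℕ) (k : Fin n) : ((e n (Sum.inr k) : Fin (n+2)) : ℕ) = 2 + (k : ℕ) := by
  simp [e]; omega

lemma mink_eq (n : ℕ) (p : Fin (n+1) → Fin n → ℝ) (a b : Fin (n+1)) :
    minkProd n (p a - p b) (p a - p b) =
      ∑ i, g n i * (v n p a i - v n p b i) * (v n p a i - v n p b i) := by
  unfold minkProd
  refine Finset.sum_congr rfl fun i _ => ?_
  simp only [g, v, Pi.sub_apply]
  ring_nf

lemma cm_entry_inner (n : ℕ) (p : Fin (n+1) → Fin n → ℝ) (i j : Fin (n+2))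
    (hi : (i : ℕ) ≠ 0) (hj : (j : ℕ) ≠ 0) :
    cayleyMenger n p i j =
      ∑ t, g n t * (v n p ⟨(i:ℕ)-1, by have := i.isLt; omega⟩ t -
                    v n p ⟨(j:ℕ)-1, by have := j.isLt; omega⟩ t) *
           (v n p ⟨(i:ℕ)-1, by have := i.isLt; omega⟩ t -
                    v n p ⟨(j:ℕ)-1, by have := j.isLt; omega⟩ t) := by
  simp only [cayleyMenger, Matrix.of_apply, hi, hj, if_false, if_neg hi, if_neg hj]
  exact mink_eq n p _ _

lemma expand (n : ℕ) (p : Fin (n+1) → Fin n → ℝ) (a b : Fin (n+1)) :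
    (∑ t, g n t * (v n p a t - v n p b t) * (v n p a t - v n p b t))
      = q n p a + q n p b + ∑ t, v n p a t * (-2 * g n t * v n p b t) := by
  simp only [q]
  rw [← Finset.sum_add_distrib, ← Finset.sum_add_distrib]
  exact Finset.sum_congr rfl fun i _ => by ring

lemma key (n : ℕ) (p : Fin (n+1) → Fin n → ℝ) :
    (cayleyMenger n p).submatrix (e n) (e n) = X n p * (Y n p)ᵀ := by
  ext a b
  have hq0 : q n p 0 = 0 := by simp [q, v]
  have hv0 : ∀ t, v n p 0 t = 0 := by simp [v]
  have hm0 : minkProd n 0 0 = 0 := by simp [minkProd]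
  rw [Matrix.mul_apply, Fintype.sum_sum_type]
  cases a with
  | inl s =>
    obtain ⟨sv, hsv⟩ := s
    cases b with
    | inl t =>
      obtain ⟨tv, htv⟩ := t
      interval_cases sv <;> interval_cases tv <;>
        simp [X, Y, cayleyMenger, e_inl, Fin.sum_univ_two, fromBlocks, Matrix.submatrix_apply,
          Matrix.transpose_apply, hq0, hv0, hm0, -Fin.val_eq_zero_iff]
    | inr k =>
      interval_cases sv
      · simp [X, Y, cayleyMenger, e_inl, e_inr, Fin.sum_univ_two, fromBlocks,
          Matrix.submatrix_apply, Matrix.transpose_apply, -Fin.val_eq_zero_iff]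
      · have h1 : ((e n (Sum.inl (⟨1, hsv⟩ : Fin 2))) : ℕ) = 1 := by rw [e_inl]
        have h2 : ((e n (Sum.inr k)) : ℕ) = 2 + (k : ℕ) := e_inr n k
        rw [Matrix.submatrix_apply, cm_entry_inner n p _ _ (by omega) (by omega)]
        have hi0 : (⟨((e n (Sum.inl (⟨1, hsv⟩ : Fin 2))):ℕ) - 1,
            by have := (e n (Sum.inl (⟨1, hsv⟩ : Fin 2))).isLt; omega⟩ : Fin (n+1)) = 0 := by
          ext; simp [e_inl, e_inr]; try omega
        have hjk : (⟨((e n (Sum.inr k)):ℕ) - 1,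
            by have := (e n (Sum.inr k)).isLt; omega⟩ : Fin (n+1)) = k.succ := by
          ext; simp [e_inl, e_inr]; try omega
        rw [hi0, hjk, expand]
        simp [X, Y, Fin.sum_univ_two, fromBlocks, Matrix.transpose_apply, hv0, hq0]
  | inr j =>
    cases b with
    | inl t =>
      obtain ⟨tv, htv⟩ := t
      interval_cases tv
      · simp [X, Y, cayleyMenger, e_inl, e_inr, Fin.sum_univ_two, fromBlocks,
          Matrix.submatrix_apply, Matrix.transpose_apply, -Fin.val_eq_zero_iff]
      · have h1 : ((e n (Sum.inl (⟨1, htv⟩ : Fin 2))) : ℕ) = 1 := by rw [e_inl]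
        have h2 : ((e n (Sum.inr j)) : ℕ) = 2 + (j : ℕ) := e_inr n j
        rw [Matrix.submatrix_apply, cm_entry_inner n p _ _ (by omega) (by omega)]
        have hi0 : (⟨((e n (Sum.inl (⟨1, htv⟩ : Fin 2))):ℕ) - 1,
            by have := (e n (Sum.inl (⟨1, htv⟩ : Fin 2))).isLt; omega⟩ : Fin (n+1)) = 0 := by
          ext; simp [e_inl, e_inr]; try omega
        have hjk : (⟨((e n (Sum.inr j)):ℕ) - 1,
            by have := (e n (Sum.inr j)).isLt; omega⟩ : Fin (n+1)) = j.succ := by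
          ext; simp [e_inl, e_inr]; try omega
        rw [hjk, hi0, expand]
        simp [X, Y, Fin.sum_univ_two, fromBlocks, Matrix.transpose_apply, hv0, hq0]
    | inr k =>
      have h2 : ((e n (Sum.inr j)) : ℕ) = 2 + (j : ℕ) := e_inr n j
      have h3 : ((e n (Sum.inr k)) : ℕ) = 2 + (k : ℕ) := e_inr n k
      rw [Matrix.submatrix_apply, cm_entry_inner n p _ _ (by omega) (by omega)]
      have hjj : (⟨((e n (Sum.inr j)):ℕ) - 1,
          by have := (e n (Sum.inr j)).isLt; omega⟩ : Fin (n+1)) = j.succ := by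
        ext; simp [e_inl, e_inr]; try omega
      have hkk : (⟨((e n (Sum.inr k)):ℕ) - 1,
          by have := (e n (Sum.inr k)).isLt; omega⟩ : Fin (n+1)) = k.succ := by
        ext; simp [e_inl, e_inr]; try omega
      rw [hjj, hkk, expand]
      simp [X, Y, V, Fin.sum_univ_two, fromBlocks, Matrix.transpose_apply]
      ring

lemma det_X (n : ℕ) (p : Fin (n+1) → Fin n → ℝ) : (X n p).det = -(V n p).det := by
  rw [X, Matrix.det_fromBlocks_zero₁₂]
  simp [Matrix.det_fin_two_of]

lemma prod_g (n : ℕ) (hn : 1 ≤ n) : ∏ i, g n i = -1 := by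
  have hlt : n - 1 < n := by omega
  rw [Finset.prod_eq_single (⟨n-1, hlt⟩ : Fin n)]
  · simp [g]
  · intro i _ hne
    have : (i : ℕ) ≠ n - 1 := fun h => hne (by ext; simpa using h)
    simp [g, this]
  · simp

lemma det_Y (n : ℕ) (hn : 1 ≤ n) (p : Fin (n+1) → Fin n → ℝ) :
    (Y n p).det = -((-2:ℝ)^n) * (V n p).det := by
  rw [Y, Matrix.det_fromBlocks_zero₁₂, Matrix.det_one, one_mul]
  have hD : (Matrix.of fun k i => -2 * g n i * v n p k.succ i) =
      V n p * Matrix.diagonal (fun i => -2 * g n i) := by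
    ext k i
    simp [Matrix.mul_diagonal, V]
    ring
  rw [hD, Matrix.det_mul, Matrix.det_diagonal, Finset.prod_mul_distrib,
    Finset.prod_const, prod_g n hn]
  simp
  ring

end CMaux

/-- Modified Cayley–Menger formula in Minkowski `n`-space. -/
theorem minkowski_cayley_menger (n : ℕ) (hn : 1 ≤ n) (p : Fin (n + 1) → Fin n → ℝ) :
    (simplexVol n p) ^ 2 =
      ((-1 : ℝ) ^ n / (2 ^ n * ((n.factorial : ℝ)) ^ 2)) * (cayleyMenger n p).det := by
  have hdet : (cayleyMenger n p).det = (-2:ℝ)^n * ((CMaux.V n p).det)^2 := by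
    rw [← Matrix.det_submatrix_equiv_self (CMaux.e n), CMaux.key, Matrix.det_mul,
      Matrix.det_transpose, CMaux.det_X, CMaux.det_Y n hn p]
    ring
  have hVeq : (Matrix.of fun i j : Fin n => p i.succ j - p 0 j) = CMaux.V n p := rfl
  rw [hdet, simplexVol, hVeq, mul_pow, sq_abs]
  have hf : ((n.factorial : ℝ)) ≠ 0 := Nat.cast_ne_zero.mpr n.factorial_ne_zero
  have hm2 : (-2:ℝ)^n = (-1)^n * 2^n := by rw [← mul_pow]; norm_num
  have h11 : (-1:ℝ)^n * (-1)^n = 1 := by rw [← mul_pow]; norm_num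
  rw [hm2]
  have h12 : (-1:ℝ)^(n*2) = 1 := by rw [mul_comm, pow_mul]; norm_num
  field_simp
  ring_nf
  simp only [h12]
  ring
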